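/- (Theorem: integration error of the central quadrature.) Let D ⊆ ℝ^m be a measurable set of finite Lebesgue measure vol(D), let L ∈ ℝ^{m×m}, let ε > 0, and let x̂₁,…,x̂_M ∈ D satisfy sup_{x ∈ D} min_{j=1,…,M} ‖L(x − x̂_j)‖₂ ≤ ε. For any f ∈ 𝓛(D, L), let f̄ be the central approximation built from the data (x̂_j, f(x̂_j)). Then |∫_D f̄(x) dx − ∫_D f(x) dx| ≤ ε · vol(D). Moreover, for any other f̃ ∈ 𝓛(D, L) with f̃(x̂_j) = f(x̂_j) for all j, |∫_D f̃(x) dx − ∫_D f(x) dx| ≤ 2ε · vol(D). -/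

import Mathlib

open Matrix

/-- The matrix-vector product as a map on Euclidean space,
so that `‖mulVecE L v‖` is the Euclidean 2-norm of `L v`. -/
noncomputable def mulVecE {m : ℕ} (L : Matrix (Fin m) (Fin m) ℝ)
    (v : EuclideanSpace ℝ (Fin m)) : EuclideanSpace ℝ (Fin m) :=
  Matrix.toEuclideanCLM (𝕜 := ℝ) L v

/-- The Lipschitz-matrix class `𝓛(D, L)`. -/
def MemLip {m : ℕ} (D : Set (EuclideanSpace ℝ (Fin m))) (L : Matrix (Fin m) (Fin m) ℝ)
    (f : EuclideanSpace ℝ (Fin m) → ℝ) : Prop :=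
  ∀ x₁ ∈ D, ∀ x₂ ∈ D, |f x₁ - f x₂| ≤ ‖mulVecE L (x₁ - x₂)‖

/-- The lower envelope `f₋(x) = max_j (y_j - ‖L(x - x̂_j)‖₂)` determined by data `(x̂_j, y_j)`. -/
noncomputable def lowerEnv {m M : ℕ} (L : Matrix (Fin m) (Fin m) ℝ)
    (xh : Fin M → EuclideanSpace ℝ (Fin m)) (y : Fin M → ℝ)
    (x : EuclideanSpace ℝ (Fin m)) : ℝ :=
  ⨆ j, (y j - ‖mulVecE L (x - xh j)‖)

/-- The upper envelope `f₊(x) = min_j (y_j + ‖L(x - x̂_j)‖₂)` determined by data `(x̂_j, y_j)`. -/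
noncomputable def upperEnv {m M : ℕ} (L : Matrix (Fin m) (Fin m) ℝ)
    (xh : Fin M → EuclideanSpace ℝ (Fin m)) (y : Fin M → ℝ)
    (x : EuclideanSpace ℝ (Fin m)) : ℝ :=
  ⨅ j, (y j + ‖mulVecE L (x - xh j)‖)

/-- The central approximation `f̄ = (f₋ + f₊)/2`. -/
noncomputable def centralApprox {m M : ℕ} (L : Matrix (Fin m) (Fin m) ℝ)
    (xh : Fin M → EuclideanSpace ℝ (Fin m)) (y : Fin M → ℝ)
    (x : EuclideanSpace ℝ (Fin m)) : ℝ :=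
  (lowerEnv L xh y x + upperEnv L xh y x) / 2
open MeasureTheory

section Aux
open Finset in
lemma measurable_lowerEnv {m M : ℕ} [NeZero M] (L : Matrix (Fin m) (Fin m) ℝ)
    (xh : Fin M → EuclideanSpace ℝ (Fin m)) (y : Fin M → ℝ) :
    Measurable (lowerEnv L xh y) := by
  have key : ∀ j : Fin M, Measurable (fun x => y j - ‖mulVecE L (x - xh j)‖) := fun j =>
    (continuous_const.sub (((Matrix.toEuclideanCLM (𝕜 := ℝ) L).continuous.comp
      (continuous_id.sub continuous_const)).norm)).measurable
  have : lowerEnv L xh y =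
      Finset.univ.sup' univ_nonempty (fun j x => y j - ‖mulVecE L (x - xh j)‖) := by
    funext x
    rw [Finset.sup'_apply, Finset.sup'_univ_eq_ciSup]
    rfl
  rw [this]
  exact Finset.measurable_sup' _ fun j _ => key j

lemma measurable_finset_inf' {ι δ : Type*} [MeasurableSpace δ] {s : Finset ι}
    (hs : s.Nonempty) {f : ι → δ → ℝ} (hf : ∀ i ∈ s, Measurable (f i)) :
    Measurable (fun x => s.inf' hs fun i => f i x) := by
  induction hs using Finset.Nonempty.cons_induction with
  | singleton i =>
    convert hf i (Finset.mem_singleton_self i) using 1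
    ext x; simp
  | cons i s his hs ih =>
    simp only [Finset.inf'_cons hs]
    exact (hf i (by simp)).inf (ih fun j hj => hf j (Finset.mem_cons_of_mem hj))

open Finset in
lemma measurable_upperEnv {m M : ℕ} [NeZero M] (L : Matrix (Fin m) (Fin m) ℝ)
    (xh : Fin M → EuclideanSpace ℝ (Fin m)) (y : Fin M → ℝ) :
    Measurable (upperEnv L xh y) := by
  have key : ∀ j : Fin M, Measurable (fun x => y j + ‖mulVecE L (x - xh j)‖) := fun j =>
    (continuous_const.add (((Matrix.toEuclideanCLM (𝕜 := ℝ) L).continuous.comp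
      (continuous_id.sub continuous_const)).norm)).measurable
  have heq : upperEnv L xh y =
      fun x => Finset.univ.inf' univ_nonempty fun j => y j + ‖mulVecE L (x - xh j)‖ := by
    funext x
    rw [Finset.inf'_univ_eq_ciInf]
    rfl
  rw [heq]
  exact measurable_finset_inf' _ fun j _ => key j

lemma norm_mulVecE_sub_comm {m : ℕ} (L : Matrix (Fin m) (Fin m) ℝ)
    (a b : EuclideanSpace ℝ (Fin m)) : ‖mulVecE L (a - b)‖ = ‖mulVecE L (b - a)‖ := by
  unfold mulVecE
  rw [← neg_sub b a, map_neg, norm_neg]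

open MeasureTheory in
lemma abs_integral_sub_le {m : ℕ} {D : Set (EuclideanSpace ℝ (Fin m))}
    (hD : MeasurableSet D) (hvol : volume D ≠ ⊤)
    {g h : EuclideanSpace ℝ (Fin m) → ℝ} {c : ℝ}
    (hg : IntegrableOn g D) (hh : IntegrableOn h D)
    (hc : ∀ x ∈ D, |g x - h x| ≤ c) :
    |(∫ x in D, g x) - ∫ x in D, h x| ≤ c * (volume D).toReal := by
  rw [← integral_sub hg hh]
  have := norm_setIntegral_le_of_norm_le_const (μ := volume)
    (f := fun x => g x - h x) hvol.lt_top
    (fun x hx => by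
      rw [Real.norm_eq_abs]; exact hc x hx)
  simpa [Real.norm_eq_abs, Measure.real] using this

end Aux

/-- if the samples have `L`-fill distance at most `ε` on a measurable domain of
finite volume, then integrating the central approximation of `f ∈ 𝓛(D, L)` incurs error at most
`ε · vol(D)`, and integrating any other interpolant from `𝓛(D, L)` incurs error at most
`2ε · vol(D)`. -/
theorem central_quadrature_error {m M : ℕ} (hM : 0 < M)
    (D : Set (EuclideanSpace ℝ (Fin m))) (hD : MeasurableSet D)
    (hvol : volume D ≠ ⊤)
    (L : Matrix (Fin m) (Fin m) ℝ)
    (xh : Fin M → EuclideanSpace ℝ (Fin m)) (hx : ∀ j, xh j ∈ D)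
    (ε : ℝ) (hε : 0 < ε)
    (hfill : ∀ x ∈ D, (⨅ j, ‖mulVecE L (x - xh j)‖) ≤ ε)
    (f : EuclideanSpace ℝ (Fin m) → ℝ) (hf : MemLip D L f) :
    |(∫ x in D, centralApprox L xh (fun j => f (xh j)) x) - ∫ x in D, f x|
        ≤ ε * (volume D).toReal ∧
      ∀ ft : EuclideanSpace ℝ (Fin m) → ℝ, MemLip D L ft →
        (∀ j, ft (xh j) = f (xh j)) →
        |(∫ x in D, ft x) - ∫ x in D, f x| ≤ 2 * ε * (volume D).toReal := by
  haveI : NeZero M := ⟨hM.ne'⟩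
  haveI : Nonempty (Fin M) := ⟨⟨0, hM⟩⟩
  set y : Fin M → ℝ := fun j => f (xh j) with hy
  -- nearest sample within ε
  have hnear : ∀ x ∈ D, ∃ j, ‖mulVecE L (x - xh j)‖ ≤ ε := by
    intro x hxD
    obtain ⟨j, hj⟩ := exists_eq_ciInf_of_finite (f := fun j => ‖mulVecE L (x - xh j)‖)
    exact ⟨j, hj ▸ hfill x hxD⟩
  -- sandwich lemma: any interpolant lies between the envelopes
  have sandwich : ∀ g : EuclideanSpace ℝ (Fin m) → ℝ, MemLip D L g →
      (∀ j, g (xh j) = y j) → ∀ x ∈ D,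
      lowerEnv L xh y x ≤ g x ∧ g x ≤ upperEnv L xh y x := by
    intro g hg hgy x hxD
    constructor
    · apply ciSup_le
      intro j
      have := hg (xh j) (hx j) x hxD
      rw [hgy j] at this
      have h1 : y j - g x ≤ ‖mulVecE L (xh j - x)‖ := (abs_le.mp this).2.trans_eq rfl |>.trans (le_refl _) |>.trans_eq rfl
      rw [norm_mulVecE_sub_comm] at h1
      linarith [h1]
    · apply le_ciInf
      intro j
      have := hg x hxD (xh j) (hx j)
      rw [hgy j] at this
      have h1 : g x - y j ≤ ‖mulVecE L (x - xh j)‖ := (abs_le.mp this).2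
      linarith
  -- gap bound
  have gap : ∀ x ∈ D, upperEnv L xh y x - lowerEnv L xh y x ≤ 2 * ε := by
    intro x hxD
    obtain ⟨j, hj⟩ := hnear x hxD
    have hfin : ∀ (v : Fin M → ℝ), BddAbove (Set.range v) := fun v => (Set.finite_range v).bddAbove
    have hfin' : ∀ (v : Fin M → ℝ), BddBelow (Set.range v) := fun v => (Set.finite_range v).bddBelow
    have h1 : upperEnv L xh y x ≤ y j + ‖mulVecE L (x - xh j)‖ := by
      unfold upperEnv; exact ciInf_le (hfin' _) j
    have h2 : y j - ‖mulVecE L (x - xh j)‖ ≤ lowerEnv L xh y x := by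
      unfold lowerEnv
      exact le_ciSup (f := fun j => y j - ‖mulVecE L (x - xh j)‖) (hfin _) j
    linarith
  -- f itself satisfies the sandwich
  have hfsand := sandwich f hf (fun j => rfl)
  -- pointwise bound for the central approximation
  have hcent : ∀ x ∈ D, |centralApprox L xh y x - f x| ≤ ε := by
    intro x hxD
    obtain ⟨h1, h2⟩ := hfsand x hxD
    have h3 := gap x hxD
    rw [abs_le]
    unfold centralApprox
    constructor <;> [linarith; linarith]
  -- boundedness of f on D
  set B : ℝ := Finset.univ.sup' Finset.univ_nonempty (fun j => |f (xh j)|) with hB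
  have hBj : ∀ j, |f (xh j)| ≤ B := fun j => by
    rw [hB]; exact Finset.le_sup' (fun j => |f (xh j)|) (Finset.mem_univ j)
  have hfb : ∀ x ∈ D, |f x| ≤ B + ε := by
    intro x hxD
    obtain ⟨j, hj⟩ := hnear x hxD
    have := hf x hxD (xh j) (hx j)
    calc |f x| ≤ |f x - f (xh j)| + |f (xh j)| := by
          simpa using abs_add_le (f x - f (xh j)) (f (xh j))
      _ ≤ ε + B := add_le_add (this.trans hj) (hBj j)
      _ = B + ε := add_comm _ _
  -- measurability of f on D (Lipschitz)
  have hflip : ∀ g : EuclideanSpace ℝ (Fin m) → ℝ, MemLip D L g →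
      AEStronglyMeasurable g (volume.restrict D) := by
    intro g hg
    have : LipschitzOnWith (Real.toNNReal ‖Matrix.toEuclideanCLM (𝕜 := ℝ) L‖) g D := by
      apply LipschitzOnWith.of_dist_le' (K := ‖Matrix.toEuclideanCLM (𝕜 := ℝ) L‖)
      intro a ha b hb
      rw [Real.dist_eq, dist_eq_norm]
      exact (hg a ha b hb).trans ((Matrix.toEuclideanCLM (𝕜 := ℝ) L).le_opNorm _)
    exact (this.continuousOn).aestronglyMeasurable hD
  -- integrability of a bounded measurable function on D
  have hint : ∀ g : EuclideanSpace ℝ (Fin m) → ℝ, AEStronglyMeasurable g (volume.restrict D) →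
      ∀ c : ℝ, (∀ x ∈ D, |g x| ≤ c) → IntegrableOn g D := by
    intro g hgm c hgc
    apply Integrable.mono' (g := fun _ => c) (integrableOn_const hvol) hgm
    rw [ae_restrict_iff' hD]
    exact Filter.Eventually.of_forall hgc
  have hfint : IntegrableOn f D := hint f (hflip f hf) (B + ε) hfb
  have hcint : IntegrableOn (centralApprox L xh y) D := by
    apply hint _ ((measurable_lowerEnv L xh y).add
      (measurable_upperEnv L xh y) |>.div_const 2).aestronglyMeasurable (B + ε + ε)
    intro x hxD
    calc |centralApprox L xh y x| ≤ |centralApprox L xh y x - f x| + |f x| := by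
          simpa using abs_add_le (centralApprox L xh y x - f x) (f x)
      _ ≤ ε + (B + ε) := add_le_add (hcent x hxD) (hfb x hxD)
      _ = B + ε + ε := by ring
  constructor
  · exact abs_integral_sub_le hD hvol hcint hfint hcent
  · intro ft hft hfty
    have hftsand := sandwich ft hft hfty
    have hftc : ∀ x ∈ D, |ft x - f x| ≤ 2 * ε := by
      intro x hxD
      obtain ⟨l1, l2⟩ := hftsand x hxD
      obtain ⟨m1, m2⟩ := hfsand x hxD
      have := gap x hxD
      rw [abs_le]
      constructor <;> linarith
    have hftb : ∀ x ∈ D, |ft x| ≤ B + ε + 2 * ε := by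
      intro x hxD
      calc |ft x| ≤ |ft x - f x| + |f x| := by simpa using abs_add_le (ft x - f x) (f x)
        _ ≤ 2 * ε + (B + ε) := add_le_add (hftc x hxD) (hfb x hxD)
        _ = B + ε + 2 * ε := by ring
    have hftint : IntegrableOn ft D := hint ft (hflip ft hft) _ hftb
    exact abs_integral_sub_le hD hvol hftint hfint hftc
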